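/- Let A be a good-monomial algebra for Γ over F. Define f(b,a) = e(b, d(b,a)) ∈ A for a < b in Γ, let d : A ⊗_F Ĉ_n → A ⊗_F Ĉ_{n−1} (n ≥ 0) be given by d(m ⊗ [(b_n > ⋯ > b₀); b,q]) = m·f(b,b_n) ⊗ [(b_{n−1} > ⋯ > b₀); b_n, q − d(b,b_n)] − m ⊗ δ̂[(b_n > ⋯ > b₀); b,q], let d : A ⊗_F Ĉ_{−1} → A be given by d(m ⊗ [( ); b,q]) = m·e(b,q), and let ε : A → F be the augmentation. Then the sequence ⋯ → A ⊗_F Ĉ₁ → A ⊗_F Ĉ₀ → A ⊗_F Ĉ_{−1} → A → F → 0 is exact; in particular A ⊗_F Ĉ_• → A is a free resolution of the left A-module F = A/A₊. -/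

import Mathlib

/-- A finite ranked poset: a partial order with a unique minimal element `star`
and a rank function `rk` such that `rk star = 0`, covering relations increase the
rank by exactly one, and `rk` is strictly monotone (for a finite poset this is
equivalent to: all maximal chains in `[star, x]` have the same length `rk x`). -/
structure RankedPoset (Γ : Type) [PartialOrder Γ] where
  star : Γ
  rk : Γ → ℕ
  bot_le : ∀ x, star ≤ x
  rk_star : rk star = 0
  rk_covBy : ∀ ⦃x y : Γ⦄, x ⋖ y → rk y = rk x + 1
  rk_strictMono : StrictMono rk

variable {Γ : Type} [PartialOrder Γ]

/-- A basis element `[(b_n > ⋯ > b₀); b, q]` of the `(b,q)`-summand of `Ĉ_{n-1}`: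
here `b ∈ Γ₊`, `1 ≤ q ≤ rk b`, and `b > b_n > ⋯ > b₀` is a strictly decreasing chain
(recorded as the list `l = [b_n, …, b₀]` of length `n`) contained in
`Γ_{b,q} = {a : * < a < b, rk b - rk a ≤ q - 1}`. -/
structure ChainIdx (R : RankedPoset Γ) (n : ℕ) where
  b : Γ
  q : ℕ
  l : List Γ
  hq1 : 1 ≤ q
  hq2 : q ≤ R.rk b
  hlen : l.length = n
  hpair : List.Pairwise (· > ·) (b :: l)
  hmem : ∀ a ∈ l, R.star < a ∧ R.rk b - R.rk a ≤ q - 1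

namespace ChainIdx

variable {R : RankedPoset Γ} {n : ℕ}

theorem l_ne_nil (β : ChainIdx R (n + 1)) : β.l ≠ [] :=
  List.ne_nil_of_length_pos (by rw [β.hlen]; omega)

theorem head_lt (β : ChainIdx R (n + 1)) : β.l.head β.l_ne_nil < β.b :=
  (List.pairwise_cons.mp β.hpair).1 _ (List.head_mem β.l_ne_nil)

/-- `[(b_{n-1} > ⋯ > b₀); b_n, q - d(b,b_n)]`, the index appearing in the leading term of
the differential. -/
def top (β : ChainIdx R (n + 1)) : ChainIdx R n where
  b := β.l.head β.l_ne_nil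
  q := β.q - (R.rk β.b - R.rk (β.l.head β.l_ne_nil))
  l := β.l.tail
  hq1 := by
    have h1 := (β.hmem _ (List.head_mem β.l_ne_nil)).2
    have h2 := β.hq1
    omega
  hq2 := by
    have h1 := R.rk_strictMono β.head_lt
    have h2 := β.hq2
    omega
  hlen := by
    have := β.hlen
    cases h : β.l with
    | nil => exact absurd h β.l_ne_nil
    | cons a t => simp [h] at this ⊢; omega
  hpair := by
    have h := β.hpair.of_cons
    rwa [← List.cons_head_tail β.l_ne_nil] at h
  hmem := by
    intro a ha
    have hal : a ∈ β.l := List.mem_of_mem_tail ha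
    have h1 := (β.hmem a hal).1
    have h2 := (β.hmem a hal).2
    have hpl : List.Pairwise (· > ·) (β.l.head β.l_ne_nil :: β.l.tail) := by
      have h := β.hpair.of_cons
      rwa [← List.cons_head_tail β.l_ne_nil] at h
    have h3 : a < β.l.head β.l_ne_nil := (List.pairwise_cons.mp hpl).1 a ha
    have h4 := R.rk_strictMono h3
    have h5 := R.rk_strictMono β.head_lt
    have h6 := β.hq1
    have h7 := β.hq2
    exact ⟨h1, by omega⟩

/-- The index obtained by deleting the `i`-th entry of the chain (i.e. `b_{n-i}`). -/
def del (β : ChainIdx R (n + 1)) (i : Fin (n + 1)) : ChainIdx R n where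
  b := β.b
  q := β.q
  l := β.l.eraseIdx i
  hq1 := β.hq1
  hq2 := β.hq2
  hlen := by
    have h1 := List.length_eraseIdx_add_one (l := β.l) (i := i) (by rw [β.hlen]; exact i.isLt)
    have h2 := β.hlen
    omega
  hpair := List.Pairwise.sublist ((β.l.eraseIdx_sublist i).cons₂ β.b) β.hpair
  hmem := fun a ha => β.hmem a ((β.l.eraseIdx_sublist i).subset ha)

end ChainIdx

section Differential

variable (R : RankedPoset Γ) (A : Type) [Ring A]

/-- The value of the differential on the basis element `1 ⊗ [(b_n > ⋯ > b₀); b,q]`: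
`f(b,b_n) ⊗ [(b_{n-1} > ⋯ > b₀); b_n, q - d(b,b_n)] - 1 ⊗ δ̂[(b_n > ⋯ > b₀); b,q]`. -/
noncomputable def dBasis (f : Γ → Γ → A) {n : ℕ} (β : ChainIdx R (n + 1)) :
    ChainIdx R n →₀ A :=
  Finsupp.single β.top (f β.b (β.l.head β.l_ne_nil)) -
    ∑ i : Fin (n + 1), Finsupp.single (β.del i) ((-1 : A) ^ (i : ℕ))

/-- The differential `d : A ⊗ Ĉ_n → A ⊗ Ĉ_{n-1}` (the free `A`-module `A ⊗ Ĉ_n` being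
realized as the finitely supported functions `ChainIdx R (n+1) →₀ A`), extended from
`d(m ⊗ [(b_n > ⋯ > b₀); b,q]) = m·f(b,b_n) ⊗ [(b_{n-1} > ⋯ > b₀); b_n, q - d(b,b_n)]
  - m ⊗ δ̂[(b_n > ⋯ > b₀); b,q]`. -/
noncomputable def dMap (f : Γ → Γ → A) (n : ℕ) :
    (ChainIdx R (n + 1) →₀ A) → (ChainIdx R n →₀ A) :=
  fun x => x.sum fun β m => (dBasis R A f β).mapRange (fun a => m * a) (mul_zero m)

end Differential

section GoodMonomial

variable (R : RankedPoset Γ)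

/-- A list `[(x₁,k₁),…,(x_r,k_r)]` indexes a good monomial `e(x₁,k₁)⋯e(x_r,k_r)` if each
`xᵢ ∈ Γ₊`, `1 ≤ kᵢ ≤ rk xᵢ`, and no `(xᵢ,kᵢ) ⊵ (xᵢ₊₁,kᵢ₊₁)`, i.e. it never happens that
`xᵢ > xᵢ₊₁` with `kᵢ = rk xᵢ - rk xᵢ₊₁`. -/
def IsGoodList (l : List (Γ × ℕ)) : Prop :=
  (∀ p ∈ l, p.1 ≠ R.star ∧ 1 ≤ p.2 ∧ p.2 ≤ R.rk p.1) ∧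
    List.Chain' (fun p q => ¬(q.1 < p.1 ∧ p.2 = R.rk p.1 - R.rk q.1)) l

variable (A : Type) [Ring A] (e : Γ → ℕ → A)

/-- The good monomial `e(x₁,k₁)⋯e(x_r,k_r)` indexed by a good list. -/
def goodMonomial (l : {l : List (Γ × ℕ) // IsGoodList R l}) : A :=
  (l.1.map fun p => e p.1 p.2).prod

end GoodMonomial

/-- The differential `d : A ⊗ Ĉ_{-1} → A`, `m ⊗ [( ); b,q] ↦ m·e(b,q)`. -/
noncomputable def dNeg (R : RankedPoset Γ) (A : Type) [Ring A] (e : Γ → ℕ → A) :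
    (ChainIdx R 0 →₀ A) → A :=
  fun x => x.sum fun β m => m * e β.b β.q

namespace GoodResolution

variable {Γ : Type} [PartialOrder Γ]

theorem chainIdx_ext {R : RankedPoset Γ} {n : ℕ} {β γ : ChainIdx R n}
    (hb : β.b = γ.b) (hq : β.q = γ.q) (hl : β.l = γ.l) : β = γ := by
  cases β; cases γ
  dsimp at hb hq hl
  subst hb; subst hq; subst hl
  rfl

theorem ne_star_of_rk_pos {R : RankedPoset Γ} {b : Γ} (h : 1 ≤ R.rk b) : R.star < b := by
  rcases lt_or_eq_of_le (R.bot_le b) with h' | h'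
  · exact h'
  · exfalso; rw [← h', R.rk_star] at h; omega

theorem star_lt_b {R : RankedPoset Γ} {n : ℕ} (β : ChainIdx R n) : R.star < β.b :=
  ne_star_of_rk_pos (le_trans β.hq1 β.hq2)

theorem b_ne_star {R : RankedPoset Γ} {n : ℕ} (β : ChainIdx R n) : β.b ≠ R.star :=
  fun h => absurd (h ▸ star_lt_b β) (lt_irrefl _)

theorem mem_lt_b {R : RankedPoset Γ} {n : ℕ} (β : ChainIdx R n) {a : Γ} (ha : a ∈ β.l) :
    a < β.b :=
  (List.pairwise_cons.mp β.hpair).1 a ha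

theorem mem_ne_star {R : RankedPoset Γ} {n : ℕ} (β : ChainIdx R n) {a : Γ} (ha : a ∈ β.l) :
    a ≠ R.star :=
  fun h => absurd (h ▸ (β.hmem a ha).1) (lt_irrefl _)

/-- The index `[(b > b_n > ⋯ > b₀); x, q + (rk x - rk b)]` obtained by prepending
`b` to the chain of `β` and replacing the top `b` of `β` by a larger `x`. -/
def push {R : RankedPoset Γ} {n : ℕ} (β : ChainIdx R n) (x : Γ) (hx : β.b < x) :
    ChainIdx R (n + 1) where
  b := x
  q := β.q + (R.rk x - R.rk β.b)
  l := β.b :: β.l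
  hq1 := by have := β.hq1; omega
  hq2 := by have h1 := R.rk_strictMono hx; have := β.hq2; omega
  hlen := by simp [β.hlen]
  hpair := by
    refine List.pairwise_cons.mpr ⟨?_, β.hpair⟩
    intro a ha
    rcases List.mem_cons.mp ha with rfl | ha'
    · exact hx
    · exact lt_trans (mem_lt_b β ha') hx
  hmem := by
    intro a ha
    have hrx := R.rk_strictMono hx
    rcases List.mem_cons.mp ha with rfl | ha'
    · refine ⟨star_lt_b β, ?_⟩
      have := β.hq1; omega
    · have h1 := (β.hmem a ha').1
      have h2 := (β.hmem a ha').2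
      have h3 := R.rk_strictMono (mem_lt_b β ha')
      have := β.hq1
      exact ⟨h1, by omega⟩

@[simp] theorem push_b {R : RankedPoset Γ} {n : ℕ} (β : ChainIdx R n) (x : Γ) (hx : β.b < x) :
    (push β x hx).b = x := rfl

@[simp] theorem push_q {R : RankedPoset Γ} {n : ℕ} (β : ChainIdx R n) (x : Γ) (hx : β.b < x) :
    (push β x hx).q = β.q + (R.rk x - R.rk β.b) := rfl

@[simp] theorem push_l {R : RankedPoset Γ} {n : ℕ} (β : ChainIdx R n) (x : Γ) (hx : β.b < x) :
    (push β x hx).l = β.b :: β.l := rfl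

@[simp] theorem top_b {R : RankedPoset Γ} {n : ℕ} (β : ChainIdx R (n+1)) :
    β.top.b = β.l.head β.l_ne_nil := rfl

@[simp] theorem top_q {R : RankedPoset Γ} {n : ℕ} (β : ChainIdx R (n+1)) :
    β.top.q = β.q - (R.rk β.b - R.rk (β.l.head β.l_ne_nil)) := rfl

@[simp] theorem top_l {R : RankedPoset Γ} {n : ℕ} (β : ChainIdx R (n+1)) :
    β.top.l = β.l.tail := rfl

@[simp] theorem del_b {R : RankedPoset Γ} {n : ℕ} (β : ChainIdx R (n+1)) (i : Fin (n+1)) :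
    (β.del i).b = β.b := rfl

@[simp] theorem del_q {R : RankedPoset Γ} {n : ℕ} (β : ChainIdx R (n+1)) (i : Fin (n+1)) :
    (β.del i).q = β.q := rfl

@[simp] theorem del_l {R : RankedPoset Γ} {n : ℕ} (β : ChainIdx R (n+1)) (i : Fin (n+1)) :
    (β.del i).l = β.l.eraseIdx i := rfl

theorem push_top {R : RankedPoset Γ} {n : ℕ} (β : ChainIdx R n) (x : Γ) (hx : β.b < x) :
    (push β x hx).top = β := by
  refine chainIdx_ext ?_ ?_ ?_
  · simp [push]
  · simp [push]
  · simp [push]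

theorem top_push {R : RankedPoset Γ} {n : ℕ} (β : ChainIdx R (n+1)) :
    push β.top β.b β.head_lt = β := by
  have hm := (β.hmem _ (List.head_mem β.l_ne_nil)).2
  have := β.hq1
  refine chainIdx_ext rfl ?_ ?_
  · show β.q - (R.rk β.b - R.rk (β.l.head β.l_ne_nil)) + (R.rk β.b - R.rk (β.l.head β.l_ne_nil)) = β.q; omega
  · exact List.cons_head_tail _

theorem push_del_succ {R : RankedPoset Γ} {n : ℕ} (β : ChainIdx R (n+1)) (x : Γ)
    (hx : β.b < x) (i : Fin (n+1)) :
    (push β x hx).del i.succ = push (β.del i) x hx := by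
  refine chainIdx_ext rfl rfl ?_
  simp [List.eraseIdx_cons_succ]
  exact rfl

theorem eraseIdx_eraseIdx {α : Type*} (l : List α) (i j : ℕ) (h : i ≤ j) :
    (l.eraseIdx i).eraseIdx j = (l.eraseIdx (j+1)).eraseIdx i := by
  induction l generalizing i j with
  | nil => simp
  | cons a t ih =>
    cases i with
    | zero => simp [List.eraseIdx_zero, List.eraseIdx_cons_succ]
    | succ i' =>
      cases j with
      | zero => omega
      | succ j' =>
        simp only [List.eraseIdx_cons_succ]
        rw [ih i' j' (by omega)]

end GoodResolution
namespace GoodResolution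
set_option linter.unusedSectionVars false

section Alg

variable {Γ : Type} [PartialOrder Γ] {R : RankedPoset Γ}
variable {F : Type} [Field F] {A : Type} [Ring A] [Algebra F A]

/-- The monomial associated to a list of pairs. -/
def gm (e : Γ → ℕ → A) (L : List (Γ × ℕ)) : A := (L.map fun p => e p.1 p.2).prod

@[simp] theorem gm_nil (e : Γ → ℕ → A) : gm e [] = 1 := rfl

theorem gm_append (e : Γ → ℕ → A) (L : List (Γ × ℕ)) (p : Γ × ℕ) :
    gm e (L ++ [p]) = gm e L * e p.1 p.2 := by
  simp [gm]

theorem isGood_nil : IsGoodList R ([] : List (Γ × ℕ)) := ⟨by simp, List.isChain_nil⟩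

theorem isGood_dropLast {L : List (Γ × ℕ)} (h : IsGoodList R L) :
    IsGoodList R L.dropLast :=
  ⟨fun p hp => h.1 p ((List.dropLast_prefix L).subset hp),
   h.2.prefix (List.dropLast_prefix L)⟩

theorem isGood_append {L : List (Γ × ℕ)} {b : Γ} {j : ℕ} (hL : IsGoodList R L)
    (hb : b ≠ R.star) (h1 : 1 ≤ j) (h2 : j ≤ R.rk b)
    (hlast : ∀ h : L ≠ [], ¬(b < (L.getLast h).1 ∧
      (L.getLast h).2 = R.rk (L.getLast h).1 - R.rk b)) :
    IsGoodList R (L ++ [(b, j)]) := by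
  constructor
  · intro p hp
    rcases List.mem_append.mp hp with hp | hp
    · exact hL.1 p hp
    · simp at hp; subst hp; exact ⟨hb, h1, h2⟩
  · change List.IsChain _ (L ++ [(b, j)])
    rw [List.isChain_append]
    refine ⟨hL.2, List.isChain_singleton _, ?_⟩
    intro x hx y hy
    simp at hy
    subst hy
    have hne : L ≠ [] := by rintro rfl; simp at hx
    rw [List.getLast?_eq_getLast hne] at hx
    simp at hx
    subst hx
    exact hlast hne

theorem isGood_replaceLast {L : List (Γ × ℕ)} {x : Γ} {k k' : ℕ}
    (h : IsGoodList R (L ++ [(x, k)])) (h1 : 1 ≤ k') (h2 : k' ≤ R.rk x) :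
    IsGoodList R (L ++ [(x, k')]) := by
  obtain ⟨hmem, hch⟩ := h
  constructor
  · intro p hp
    rcases List.mem_append.mp hp with hp | hp
    · exact hmem p (List.mem_append_left _ hp)
    · simp at hp; subst hp
      exact ⟨(hmem (x, k) (List.mem_append_right _ (by simp))).1, h1, h2⟩
  · change List.IsChain _ (L ++ [(x, k)]) at hch
    change List.IsChain _ (L ++ [(x, k')])
    rw [List.isChain_append] at hch ⊢
    refine ⟨hch.1, List.isChain_singleton _, ?_⟩
    intro p hp y hy
    simp at hy
    subst hy
    exact hch.2.2 p hp (x, k) (by simp)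

/-- The "reducibility" condition: the last element `(x,k)` of `L` satisfies
`(x,k) ⊵ (b, ·)`. -/
def RedCond (R : RankedPoset Γ) (b : Γ) (L : List (Γ × ℕ)) : Prop :=
  ∃ h : L ≠ [], b < (L.getLast h).1 ∧ (L.getLast h).2 = R.rk (L.getLast h).1 - R.rk b

theorem mul_e_notRed (e : Γ → ℕ → A) {L : List (Γ × ℕ)} {b : Γ} {j : ℕ}
    (hL : IsGoodList R L) (hb : b ≠ R.star) (h1 : 1 ≤ j) (h2 : j ≤ R.rk b)
    (hnr : ¬ RedCond R b L) :
    IsGoodList R (L ++ [(b, j)]) ∧ gm e L * e b j = gm e (L ++ [(b, j)]) := by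
  refine ⟨isGood_append hL hb h1 h2 ?_, (gm_append e L (b, j)).symm⟩
  intro hne hcon
  exact hnr ⟨hne, hcon⟩

theorem mul_e_red (e : Γ → ℕ → A)
    (hmul : ∀ x y : Γ, ∀ j k : ℕ, y ≠ R.star → y < x → j = R.rk x - R.rk y →
      1 ≤ k → k ≤ R.rk y → e x j * e y k = e x (j + k))
    {L : List (Γ × ℕ)} {b : Γ} {j : ℕ} (hne : L ≠ [])
    (hlt : b < (L.getLast hne).1)
    (hk : (L.getLast hne).2 = R.rk (L.getLast hne).1 - R.rk b)
    (hb : b ≠ R.star) (h1 : 1 ≤ j) (h2 : j ≤ R.rk b) :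
    gm e L * e b j
      = gm e (L.dropLast ++ [((L.getLast hne).1, (L.getLast hne).2 + j)]) := by
  conv_lhs => rw [← List.dropLast_append_getLast hne]
  rw [gm_append, gm_append, mul_assoc, hmul _ _ _ _ hb hlt hk h1 h2]

theorem isGood_red_merge {L : List (Γ × ℕ)} (hL : IsGoodList R L) (hne : L ≠ [])
    {k' : ℕ} (h1 : 1 ≤ k') (h2 : k' ≤ R.rk (L.getLast hne).1) :
    IsGoodList R (L.dropLast ++ [((L.getLast hne).1, k')]) := by
  refine isGood_replaceLast (k := (L.getLast hne).2) ?_ h1 h2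
  rw [List.dropLast_append_getLast hne]
  exact hL

end Alg

section Maps

variable {Γ : Type} [PartialOrder Γ] {R : RankedPoset Γ}
variable {F : Type} [Field F] {A : Type} [Ring A] [Algebra F A]

attribute [local instance] Classical.propDecidable

/-- The contracting homotopy on a basis element `m_L ⊗ β`. -/
noncomputable def sOne (e : Γ → ℕ → A) {n : ℕ} (β : ChainIdx R n) (L : List (Γ × ℕ)) :
    ChainIdx R (n + 1) →₀ A :=
  if h : L ≠ [] then
    if h2 : β.b < (L.getLast h).1 ∧
        (L.getLast h).2 = R.rk (L.getLast h).1 - R.rk β.b then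
      Finsupp.single (push β (L.getLast h).1 h2.1) (gm e L.dropLast)
    else 0
  else 0

theorem sOne_of_red (e : Γ → ℕ → A) {n : ℕ} (β : ChainIdx R n) {L : List (Γ × ℕ)}
    (h : L ≠ []) (h2 : β.b < (L.getLast h).1 ∧
      (L.getLast h).2 = R.rk (L.getLast h).1 - R.rk β.b) :
    sOne e β L = Finsupp.single (push β (L.getLast h).1 h2.1) (gm e L.dropLast) := by
  rw [sOne, dif_pos h, dif_pos h2]

theorem sOne_of_notRed (e : Γ → ℕ → A) {n : ℕ} (β : ChainIdx R n) {L : List (Γ × ℕ)}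
    (h : ¬ RedCond R β.b L) : sOne e β L = 0 := by
  rw [sOne]
  by_cases hne : L ≠ []
  · rw [dif_pos hne, dif_neg (fun h2 => h ⟨hne, h2⟩)]
  · rw [dif_neg hne]

/-- The contracting homotopy `A → A ⊗ Ĉ₋₁` on a basis element. -/
noncomputable def sNegOne (e : Γ → ℕ → A) (L : {l : List (Γ × ℕ) // IsGoodList R l}) :
    ChainIdx R 0 →₀ A :=
  if h : L.1 ≠ [] then
    Finsupp.single ⟨(L.1.getLast h).1, (L.1.getLast h).2, [],
      (L.2.1 _ (List.getLast_mem h)).2.1, (L.2.1 _ (List.getLast_mem h)).2.2, rfl,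
      List.pairwise_singleton _ _, by simp⟩ (gm e L.1.dropLast)
  else 0

/-- The differential as a linear map. -/
noncomputable def DL (e : Γ → ℕ → A) (n : ℕ) :
    (ChainIdx R (n + 1) →₀ A) →ₗ[F] (ChainIdx R n →₀ A) :=
  Finsupp.lsum F fun β =>
    { toFun := fun m => (dBasis R A (fun b a => e b (R.rk b - R.rk a)) β).mapRange
        (fun a => m * a) (mul_zero m)
      map_add' := by
        intro m m'
        ext γ
        simp [Finsupp.mapRange_apply, add_mul]
      map_smul' := by
        intro c m
        ext γ
        simp [Finsupp.mapRange_apply, smul_mul_assoc] }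

theorem DL_eq (e : Γ → ℕ → A) (n : ℕ) (x : ChainIdx R (n + 1) →₀ A) :
    DL (F := F) e n x = dMap R A (fun b a => e b (R.rk b - R.rk a)) n x := by
  rw [DL, Finsupp.lsum_apply, dMap]
  rfl

theorem dMap_single (e : Γ → ℕ → A) {n : ℕ} (β : ChainIdx R (n + 1)) (m : A) :
    dMap R A (fun b a => e b (R.rk b - R.rk a)) n (Finsupp.single β m)
      = Finsupp.single β.top (m * e β.b (R.rk β.b - R.rk (β.l.head β.l_ne_nil)))
        - ∑ i : Fin (n + 1), Finsupp.single (β.del i) (m * (-1 : A) ^ (i : ℕ)) := by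
  rw [dMap, Finsupp.sum_single_index]
  · rw [dBasis]
    have hc : (Finsupp.mapRange (fun a => m * a) (mul_zero m) :
        (ChainIdx R n →₀ A) → (ChainIdx R n →₀ A))
        = ⇑(Finsupp.mapRange.addMonoidHom (AddMonoidHom.mulLeft m)) := rfl
    rw [hc, map_sub, map_sum]
    rw [show ⇑(Finsupp.mapRange.addMonoidHom (AddMonoidHom.mulLeft m))
      = (Finsupp.mapRange (fun a => m * a) (mul_zero m) :
        (ChainIdx R n →₀ A) → (ChainIdx R n →₀ A)) from rfl]
    simp [Finsupp.mapRange_single]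
  · ext γ
    simp [Finsupp.mapRange_apply]

/-- The last differential as a linear map. -/
noncomputable def DN (e : Γ → ℕ → A) : (ChainIdx R 0 →₀ A) →ₗ[F] A :=
  Finsupp.lsum F fun β =>
    { toFun := fun m => m * e β.b β.q
      map_add' := fun m m' => add_mul m m' _
      map_smul' := fun c m => by simp [smul_mul_assoc] }

theorem DN_eq (e : Γ → ℕ → A) (x : ChainIdx R 0 →₀ A) :
    DN (F := F) e x = dNeg R A e x := by
  rw [DN, Finsupp.lsum_apply, dNeg]
  rfl

theorem dNeg_single (e : Γ → ℕ → A) (β : ChainIdx R 0) (m : A) :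
    dNeg R A e (Finsupp.single β m) = m * e β.b β.q := by
  rw [dNeg]
  exact Finsupp.sum_single_index (zero_mul _)

/-- The contracting homotopy as a linear map. -/
noncomputable def SL (e : Γ → ℕ → A)
    (bA : Module.Basis {l : List (Γ × ℕ) // IsGoodList R l} F A) (n : ℕ) :
    (ChainIdx R n →₀ A) →ₗ[F] (ChainIdx R (n + 1) →₀ A) :=
  Finsupp.lsum F fun β =>
    (Finsupp.lsum F fun L => LinearMap.toSpanSingleton F _ (sOne e β L.1)).comp
      bA.repr.toLinearMap

/-- The contracting homotopy `A → A ⊗ Ĉ₋₁` as a linear map. -/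
noncomputable def SNeg (e : Γ → ℕ → A)
    (bA : Module.Basis {l : List (Γ × ℕ) // IsGoodList R l} F A) :
    A →ₗ[F] (ChainIdx R 0 →₀ A) :=
  (Finsupp.lsum F fun L => LinearMap.toSpanSingleton F _ (sNegOne e L)).comp
    bA.repr.toLinearMap

theorem SL_single (e : Γ → ℕ → A) (bA : Module.Basis {l : List (Γ × ℕ) // IsGoodList R l} F A)
    (n : ℕ) (β : ChainIdx R n) (L : {l : List (Γ × ℕ) // IsGoodList R l}) :
    SL e bA n (Finsupp.single β (bA L)) = sOne e β L.1 := by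
  rw [SL, Finsupp.lsum_single, LinearMap.comp_apply]
  simp only [LinearEquiv.coe_coe, Module.Basis.repr_self]
  rw [Finsupp.lsum_single, LinearMap.toSpanSingleton_apply, one_smul]

theorem SNeg_basis (e : Γ → ℕ → A) (bA : Module.Basis {l : List (Γ × ℕ) // IsGoodList R l} F A)
    (L : {l : List (Γ × ℕ) // IsGoodList R l}) :
    SNeg e bA (bA L) = sNegOne e L := by
  rw [SNeg, LinearMap.comp_apply]
  simp only [LinearEquiv.coe_coe, Module.Basis.repr_self]
  rw [Finsupp.lsum_single, LinearMap.toSpanSingleton_apply, one_smul]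

theorem lhom_ext_basis {N : Type} [AddCommGroup N] [Module F N]
    (bA : Module.Basis {l : List (Γ × ℕ) // IsGoodList R l} F A) {n : ℕ}
    {f g : (ChainIdx R n →₀ A) →ₗ[F] N}
    (h : ∀ (β : ChainIdx R n) (L : {l : List (Γ × ℕ) // IsGoodList R l}),
      f (Finsupp.single β (bA L)) = g (Finsupp.single β (bA L))) : f = g := by
  apply Finsupp.lhom_ext'
  intro β
  apply Module.Basis.ext bA
  intro L
  simpa using h β L

/-- coefficient juggling: `m * (-1)^i = ((-1:F)^i) • m`. -/
theorem mul_neg_one_pow (m : A) (i : ℕ) : m * (-1 : A) ^ i = ((-1 : F) ^ i) • m := by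
  rcases Nat.even_or_odd i with h | h
  · rw [h.neg_one_pow, h.neg_one_pow, mul_one, one_smul]
  · rw [h.neg_one_pow, h.neg_one_pow, mul_neg_one, neg_one_smul]

theorem neg_one_pow_comm (m : A) (i : ℕ) : m * (-1 : A) ^ i = (-1 : A) ^ i * m := by
  rcases Nat.even_or_odd i with h | h
  · rw [h.neg_one_pow, mul_one, one_mul]
  · rw [h.neg_one_pow, mul_neg_one, neg_one_mul]

end Maps

end GoodResolution
namespace GoodResolution

section DD

variable {Γ : Type} [PartialOrder Γ] {R : RankedPoset Γ}
variable {F : Type} [Field F] {A : Type} [Ring A] [Algebra F A]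

set_option linter.unusedSectionVars false

theorem head_eq {α : Type*} {l : List α} {a : α} {t : List α} (h : l = a :: t)
    (hne : l ≠ []) : l.head hne = a := by subst h; rfl

theorem single_add_single_neg {α M : Type*} [AddCommGroup M] (γ : α) (c : M) :
    Finsupp.single γ c + Finsupp.single γ (-c) = 0 := by
  rw [← Finsupp.single_add, add_neg_cancel, Finsupp.single_zero]

/-- `d ∘ d = 0` on a single. -/
theorem dd_single (F' : Type) [Field F'] [Algebra F' A] (e : Γ → ℕ → A)
    (hmul : ∀ x y : Γ, ∀ j k : ℕ, y ≠ R.star → y < x → j = R.rk x - R.rk y →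
      1 ≤ k → k ≤ R.rk y → e x j * e y k = e x (j + k))
    {n : ℕ} (β : ChainIdx R (n + 2)) (m : A) :
    dMap R A (fun b a => e b (R.rk b - R.rk a)) n
      (dMap R A (fun b a => e b (R.rk b - R.rk a)) (n + 1) (Finsupp.single β m)) = 0 := by
  obtain ⟨a, l1, hl⟩ := List.exists_cons_of_ne_nil β.l_ne_nil
  obtain ⟨a2, l2, hl2⟩ : ∃ c t, l1 = c :: t := by
    have hlen := β.hlen
    rw [hl] at hlen
    simp only [List.length_cons] at hlen
    exact List.exists_cons_of_ne_nil (List.ne_nil_of_length_pos (by omega))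
  subst hl2
  have ha_mem : a ∈ β.l := by rw [hl]; simp
  have ha2_mem : a2 ∈ β.l := by rw [hl]; simp
  have ha_star : R.star < a := (β.hmem a ha_mem).1
  have ha2_star : R.star < a2 := (β.hmem a2 ha2_mem).1
  have ha_lt : a < β.b := mem_lt_b β ha_mem
  have ha2a : a2 < a := by
    have hp := β.hpair
    rw [hl] at hp
    exact (List.pairwise_cons.mp (List.pairwise_cons.mp hp).2).1 a2 (by simp)
  have hrk1 : R.rk a < R.rk β.b := R.rk_strictMono ha_lt
  have hrk2 : R.rk a2 < R.rk a := R.rk_strictMono ha2a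
  have hhead : β.l.head β.l_ne_nil = a := head_eq hl _
  have htop_head : β.top.l.head β.top.l_ne_nil = a2 :=
    head_eq (by rw [top_l, hl]; rfl) _
  have hdel0_head : (β.del 0).l.head (β.del 0).l_ne_nil = a2 :=
    head_eq (show (β.del 0).l = a2 :: l2 by rw [del_l, hl]; simp) _
  have hdelsucc_head : ∀ j : Fin (n + 1),
      (β.del j.succ).l.head (β.del j.succ).l_ne_nil = a := by
    intro j
    exact head_eq (t := (a2 :: l2).eraseIdx j) (by rw [del_l, hl]; exact List.eraseIdx_cons_succ) _
  rw [dMap_single, ← DL_eq (F := F'), map_sub, map_sum]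
  simp only [DL_eq, dMap_single]
  rw [Fin.sum_univ_succ
    (f := fun i : Fin (n + 2) => Finsupp.single (β.del i).top
        ((m * (-1 : A) ^ (i : ℕ)) * e (β.del i).b
          (R.rk (β.del i).b - R.rk ((β.del i).l.head (β.del i).l_ne_nil)))
      - ∑ j : Fin (n + 1), Finsupp.single ((β.del i).del j)
          ((m * (-1 : A) ^ (i : ℕ)) * (-1 : A) ^ (j : ℕ)))]
  -- T1 = T0
  have hT : Finsupp.single β.top.top
        ((m * e β.b (R.rk β.b - R.rk (β.l.head β.l_ne_nil)))
          * e β.top.b (R.rk β.top.b - R.rk (β.top.l.head β.top.l_ne_nil)))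
      = Finsupp.single (β.del 0).top
        ((m * (-1 : A) ^ (((0 : Fin (n + 2))) : ℕ)) * e (β.del 0).b
          (R.rk (β.del 0).b - R.rk ((β.del 0).l.head (β.del 0).l_ne_nil))) := by
    have hidx : β.top.top = (β.del 0).top := by
      refine chainIdx_ext ?_ ?_ ?_
      · simp only [top_b, htop_head, hdel0_head]
      · simp only [top_q, top_b, del_q, del_b, htop_head, hdel0_head, hhead]
        omega
      · simp only [top_l, del_l, Fin.val_zero, List.eraseIdx_zero]
    rw [hidx]
    congr 1
    simp only [top_b, del_b, del_q, htop_head, hdel0_head, hhead, Fin.val_zero,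
      pow_zero, mul_one]
    rw [mul_assoc, hmul β.b a _ _ (ne_of_gt ha_star) ha_lt rfl (by omega) (by omega)]
    have harith : (R.rk β.b - R.rk a) + (R.rk a - R.rk a2) = R.rk β.b - R.rk a2 := by omega
    rw [harith]
  -- the j-terms cancel pairwise
  have hU : ∀ j : Fin (n + 1),
      Finsupp.single (β.del j.succ).top
        ((m * (-1 : A) ^ ((j.succ : Fin (n + 2)) : ℕ)) * e (β.del j.succ).b
          (R.rk (β.del j.succ).b - R.rk ((β.del j.succ).l.head (β.del j.succ).l_ne_nil)))
      = - Finsupp.single (β.top.del j)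
          ((m * e β.b (R.rk β.b - R.rk (β.l.head β.l_ne_nil))) * (-1 : A) ^ (j : ℕ)) := by
    intro j
    have hidx : (β.del j.succ).top = β.top.del j := by
      refine chainIdx_ext ?_ ?_ ?_
      · simp only [top_b, del_b, hdelsucc_head j, hhead]
      · simp only [top_q, del_q, del_b, top_b, hdelsucc_head j, hhead]
      · simp only [top_l, del_l, hl, List.eraseIdx_cons_succ]
        rfl
    rw [hidx, ← Finsupp.single_neg]
    congr 1
    simp only [del_b, hdelsucc_head j, hhead, Fin.val_succ]
    rw [pow_succ, mul_neg_one, mul_neg, neg_mul, mul_assoc,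
      ← neg_one_pow_comm (e β.b (R.rk β.b - R.rk a)) (j : ℕ), ← mul_assoc]
  -- the double sum vanishes by an involution
  have hW : (∑ j : Fin (n + 1), Finsupp.single ((β.del 0).del j)
        ((m * (-1 : A) ^ (((0 : Fin (n + 2))) : ℕ)) * (-1 : A) ^ (j : ℕ)))
      + ∑ j : Fin (n + 1), ∑ j' : Fin (n + 1), Finsupp.single ((β.del j.succ).del j')
        ((m * (-1 : A) ^ ((j.succ : Fin (n + 2)) : ℕ)) * (-1 : A) ^ (j' : ℕ)) = 0 := by
    rw [← Fin.sum_univ_succ (f := fun i : Fin (n + 2) =>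
      ∑ j : Fin (n + 1), Finsupp.single ((β.del i).del j)
        ((m * (-1 : A) ^ (i : ℕ)) * (-1 : A) ^ (j : ℕ)))]
    rw [← Finset.sum_product']
    have key : ∀ (i j : ℕ) (hi : i < n + 2) (hj : j < n + 1) (hj2 : j + 1 < n + 2)
        (hi2 : i < n + 1), i ≤ j →
        Finsupp.single ((β.del ⟨i, hi⟩).del ⟨j, hj⟩)
            ((m * (-1 : A) ^ i) * (-1 : A) ^ j)
          + Finsupp.single ((β.del ⟨j + 1, hj2⟩).del ⟨i, hi2⟩)
            ((m * (-1 : A) ^ (j + 1)) * (-1 : A) ^ i) = 0 := by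
      intro i j hi hj hj2 hi2 hij
      have hidx : (β.del ⟨i, hi⟩).del ⟨j, hj⟩ = (β.del ⟨j + 1, hj2⟩).del ⟨i, hi2⟩ := by
        refine chainIdx_ext rfl rfl ?_
        simp only [del_l]
        exact eraseIdx_eraseIdx β.l i j hij
      have h1 : (-1 : A) ^ (j + 1) * (-1 : A) ^ i = -((-1 : A) ^ i * (-1 : A) ^ j) := by
        rw [← pow_add, ← pow_add, show j + 1 + i = (i + j) + 1 from by omega,
          pow_succ, pow_add, mul_neg_one]
      have hcoef : (m * (-1 : A) ^ (j + 1)) * (-1 : A) ^ i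
          = -((m * (-1 : A) ^ i) * (-1 : A) ^ j) := by
        rw [mul_assoc, h1, mul_neg, mul_assoc]
      rw [hidx, hcoef]
      exact single_add_single_neg _ _
    refine Finset.sum_involution
      (fun p _ => if h : (p.1 : ℕ) ≤ (p.2 : ℕ) then
        (⟨(p.2 : ℕ) + 1, Nat.succ_lt_succ p.2.isLt⟩,
         ⟨(p.1 : ℕ), lt_of_le_of_lt h p.2.isLt⟩)
      else
        (⟨(p.2 : ℕ), Nat.lt_succ_of_lt p.2.isLt⟩,
         ⟨(p.1 : ℕ) - 1, by have := p.1.isLt; omega⟩))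
      ?_ ?_ (fun p hp => Finset.mem_product.mpr ⟨Finset.mem_univ _, Finset.mem_univ _⟩) ?_
    · rintro ⟨⟨i, hi⟩, ⟨j, hj⟩⟩ _
      dsimp only
      split_ifs with h
      · exact key i j hi hj (Nat.succ_lt_succ hj) (lt_of_le_of_lt h hj) h
      · have h2 := key j (i - 1) (by omega) (by omega) (by omega) (by omega) (by omega)
        simp only [show i - 1 + 1 = i from by omega] at h2
        rw [add_comm]
        exact h2
    · rintro ⟨⟨i, hi⟩, ⟨j, hj⟩⟩ _ _
      dsimp only
      split_ifs with h <;>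
        · simp only [ne_eq, Prod.mk.injEq, Fin.mk.injEq, not_and]
          omega
    · rintro ⟨⟨i, hi⟩, ⟨j, hj⟩⟩ _
      dsimp only
      split_ifs with h1 h2 h3
      · exfalso; dsimp only at h2; omega
      · simp [Prod.ext_iff, Fin.ext_iff]
        try omega
      · simp [Prod.ext_iff, Fin.ext_iff]
        try omega
      · exfalso; dsimp only at h3; omega
  rw [hT]
  simp only [hU]
  rw [Finset.sum_sub_distrib, Finset.sum_neg_distrib, ← hW]
  abel

end DD

end GoodResolution
namespace GoodResolution

section Homotopy

variable {Γ : Type} [PartialOrder Γ] {R : RankedPoset Γ}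
variable {F : Type} [Field F] {A : Type} [Ring A] [Algebra F A]

set_option linter.unusedSectionVars false

theorem dnd_single (F' : Type) [Field F'] [Algebra F' A] (e : Γ → ℕ → A)
    (hmul : ∀ x y : Γ, ∀ j k : ℕ, y ≠ R.star → y < x → j = R.rk x - R.rk y →
      1 ≤ k → k ≤ R.rk y → e x j * e y k = e x (j + k))
    (β : ChainIdx R 1) (m : A) :
    dNeg R A e (dMap R A (fun b a => e b (R.rk b - R.rk a)) 0 (Finsupp.single β m)) = 0 := by
  have hd_mem : β.l.head β.l_ne_nil ∈ β.l := List.head_mem _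
  have hd_star : R.star < β.l.head β.l_ne_nil := (β.hmem _ hd_mem).1
  have hd_lt : β.l.head β.l_ne_nil < β.b := β.head_lt
  have hd_rk : R.rk β.b - R.rk (β.l.head β.l_ne_nil) ≤ β.q - 1 := (β.hmem _ hd_mem).2
  have hd_rklt : R.rk (β.l.head β.l_ne_nil) < R.rk β.b := R.rk_strictMono hd_lt
  have hq1 := β.hq1
  have hq2 := β.hq2
  rw [dMap_single, ← DN_eq (F := F'), map_sub, map_sum, Fin.sum_univ_one]
  rw [DN_eq, DN_eq, dNeg_single, dNeg_single]
  simp only [top_b, top_q, del_b, del_q, Fin.val_zero, pow_zero, mul_one]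
  rw [mul_assoc, hmul β.b (β.l.head β.l_ne_nil) _ _ (ne_of_gt hd_star) hd_lt rfl
    (by omega) (by omega)]
  rw [show R.rk β.b - R.rk (β.l.head β.l_ne_nil)
    + (β.q - (R.rk β.b - R.rk (β.l.head β.l_ne_nil))) = β.q from by omega]
  exact sub_self _

theorem homotopy_single (e : Γ → ℕ → A)
    (hmul : ∀ x y : Γ, ∀ j k : ℕ, y ≠ R.star → y < x → j = R.rk x - R.rk y →
      1 ≤ k → k ≤ R.rk y → e x j * e y k = e x (j + k))
    (bA : Module.Basis {l : List (Γ × ℕ) // IsGoodList R l} F A)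
    (hbA : ∀ L, bA L = gm e L.1) {n : ℕ} (β : ChainIdx R (n + 1))
    (L : {l : List (Γ × ℕ) // IsGoodList R l}) :
    SL e bA n (DL (F := F) e n (Finsupp.single β (bA L)))
      + DL (F := F) e (n + 1) (SL e bA (n + 1) (Finsupp.single β (bA L)))
      = Finsupp.single β (bA L) := by
  have hd_mem : β.l.head β.l_ne_nil ∈ β.l := List.head_mem _
  have hd_star : R.star < β.l.head β.l_ne_nil := (β.hmem _ hd_mem).1
  have hd_lt : β.l.head β.l_ne_nil < β.b := β.head_lt
  have hd_rk : R.rk β.b - R.rk (β.l.head β.l_ne_nil) ≤ β.q - 1 := (β.hmem _ hd_mem).2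
  have hd_rklt : R.rk (β.l.head β.l_ne_nil) < R.rk β.b := R.rk_strictMono hd_lt
  have hq1 := β.hq1
  have hq2 := β.hq2
  have hb_star : R.star < β.b := star_lt_b β
  rw [DL_eq, dMap_single, map_sub, map_sum, SL_single]
  have hdel : ∀ i : Fin (n + 1),
      SL e bA n (Finsupp.single (β.del i) (bA L * (-1 : A) ^ (i : ℕ)))
        = ((-1 : F) ^ (i : ℕ)) • sOne e (β.del i) L.1 := by
    intro i
    rw [mul_neg_one_pow (F := F), ← Finsupp.smul_single, map_smul, SL_single]
  by_cases hred : RedCond R β.b L.1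
  · -- reducible case
    obtain ⟨hne, hlt, hk⟩ := hred
    have hp_mem : L.1.getLast hne ∈ L.1 := List.getLast_mem hne
    have hp1 := L.2.1 _ hp_mem
    have hrkx : R.rk β.b < R.rk (L.1.getLast hne).1 := R.rk_strictMono hlt
    rw [sOne_of_red e β hne ⟨hlt, hk⟩]
    rw [DL_eq, dMap_single]
    have hph : (push β (L.1.getLast hne).1 hlt).l.head
        (push β (L.1.getLast hne).1 hlt).l_ne_nil = β.b :=
      head_eq (show (push β (L.1.getLast hne).1 hlt).l = β.b :: β.l from rfl) _
    rw [hph, push_top]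
    have hcoef2 : gm e L.1.dropLast
        * e (push β (L.1.getLast hne).1 hlt).b
          (R.rk (push β (L.1.getLast hne).1 hlt).b - R.rk β.b) = bA L := by
      rw [push_b, ← hk, ← gm_append e L.1.dropLast (L.1.getLast hne),
        List.dropLast_append_getLast hne, ← hbA]
    rw [hcoef2]
    -- the S(D x) top term
    have hgmM := mul_e_red e hmul hne hlt hk (ne_of_gt hb_star)
      (show 1 ≤ R.rk β.b - R.rk (β.l.head β.l_ne_nil) from by omega) (Nat.sub_le _ _)
    have hM : IsGoodList R (L.1.dropLast ++ [((L.1.getLast hne).1,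
        (L.1.getLast hne).2 + (R.rk β.b - R.rk (β.l.head β.l_ne_nil)))]) :=
      isGood_red_merge L.2 hne (by omega) (by omega)
    have hcoefM : bA L * e β.b (R.rk β.b - R.rk (β.l.head β.l_ne_nil))
        = bA ⟨_, hM⟩ := by
      rw [hbA, hbA]
      exact hgmM
    rw [hcoefM, SL_single]
    have hneM : (⟨_, hM⟩ : {l : List (Γ × ℕ) // IsGoodList R l}).1 ≠ [] := by
      simp
    have hglM : (⟨_, hM⟩ : {l : List (Γ × ℕ) // IsGoodList R l}).1.getLast hneM
        = ((L.1.getLast hne).1,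
          (L.1.getLast hne).2 + (R.rk β.b - R.rk (β.l.head β.l_ne_nil))) :=
      List.getLast_concat
    have hcondM : β.top.b < ((⟨_, hM⟩ : {l : List (Γ × ℕ) // IsGoodList R l}).1.getLast hneM).1
        ∧ ((⟨_, hM⟩ : {l : List (Γ × ℕ) // IsGoodList R l}).1.getLast hneM).2
          = R.rk ((⟨_, hM⟩ : {l : List (Γ × ℕ) // IsGoodList R l}).1.getLast hneM).1
            - R.rk β.top.b := by
      rw [hglM]
      refine ⟨lt_trans hd_lt hlt, ?_⟩
      simp only [top_b]
      omega
    rw [sOne_of_red e β.top hneM hcondM]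
    have hdropM : (⟨_, hM⟩ : {l : List (Γ × ℕ) // IsGoodList R l}).1.dropLast
        = L.1.dropLast := List.dropLast_concat
    have hpushM : push β.top ((⟨_, hM⟩ : {l : List (Γ × ℕ) // IsGoodList R l}).1.getLast hneM).1
          hcondM.1
        = (push β (L.1.getLast hne).1 hlt).del 0 := by
      refine chainIdx_ext ?_ ?_ ?_
      · rw [push_b, del_b, push_b, hglM]
      · rw [push_q, del_q, push_q, hglM]
        simp only [top_q, top_b]
        omega
      · rw [push_l, del_l, push_l]
        simp only [top_b, top_l, Fin.val_zero, List.eraseIdx_zero, List.tail_cons]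
        exact List.cons_head_tail _
    rw [hdropM, hpushM]
    have hdelred : ∀ i : Fin (n + 1),
        SL e bA n (Finsupp.single (β.del i) (bA L * (-1 : A) ^ (i : ℕ)))
          = Finsupp.single (push (β.del i) (L.1.getLast hne).1 hlt)
              (gm e L.1.dropLast * (-1 : A) ^ (i : ℕ)) := by
      intro i
      rw [mul_neg_one_pow (F := F), ← Finsupp.smul_single, map_smul, SL_single,
        sOne_of_red e (β.del i) hne ⟨hlt, hk⟩, Finsupp.smul_single, ← mul_neg_one_pow]
    simp only [hdelred]
    rw [Fin.sum_univ_succ (f := fun i : Fin (n + 2) =>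
      Finsupp.single ((push β (L.1.getLast hne).1 hlt).del i)
        (gm e L.1.dropLast * (-1 : A) ^ (i : ℕ)))]
    simp only [push_del_succ]
    have hsign : ∀ (j : Fin (n + 1)),
        Finsupp.single (push (β.del j) (L.1.getLast hne).1 hlt)
            (gm e L.1.dropLast * (-1 : A) ^ ((j.succ : Fin (n + 2)) : ℕ))
          = - Finsupp.single (push (β.del j) (L.1.getLast hne).1 hlt)
              (gm e L.1.dropLast * (-1 : A) ^ (j : ℕ)) := by
      intro j
      rw [← Finsupp.single_neg]
      congr 1
      rw [Fin.val_succ, pow_succ, ← mul_assoc, mul_neg_one]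
    simp only [hsign]
    rw [Finset.sum_neg_distrib]
    simp only [Fin.val_zero, pow_zero, mul_one]
    abel
  · -- non-reducible case
    have hgm := mul_e_notRed (e := e) (b := β.b)
      (j := R.rk β.b - R.rk (β.l.head β.l_ne_nil)) L.2 (ne_of_gt hb_star)
      (by omega) (Nat.sub_le _ _) hred
    have hcoef : bA L * e β.b (R.rk β.b - R.rk (β.l.head β.l_ne_nil))
        = bA ⟨_, hgm.1⟩ := by
      rw [hbA, hbA]
      exact hgm.2
    rw [hcoef, SL_single]
    have hne' : (⟨_, hgm.1⟩ : {l : List (Γ × ℕ) // IsGoodList R l}).1 ≠ [] := by simp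
    have hgl : (⟨_, hgm.1⟩ : {l : List (Γ × ℕ) // IsGoodList R l}).1.getLast hne'
        = (β.b, R.rk β.b - R.rk (β.l.head β.l_ne_nil)) := List.getLast_concat
    have hcond : β.top.b < ((⟨_, hgm.1⟩ : {l : List (Γ × ℕ) // IsGoodList R l}).1.getLast hne').1
        ∧ ((⟨_, hgm.1⟩ : {l : List (Γ × ℕ) // IsGoodList R l}).1.getLast hne').2
          = R.rk ((⟨_, hgm.1⟩ : {l : List (Γ × ℕ) // IsGoodList R l}).1.getLast hne').1
            - R.rk β.top.b := by
      rw [hgl]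
      exact ⟨hd_lt, rfl⟩
    rw [sOne_of_red e β.top hne' hcond]
    have hpush : push β.top ((⟨_, hgm.1⟩ : {l : List (Γ × ℕ) // IsGoodList R l}).1.getLast hne').1
        hcond.1 = β := by
      refine chainIdx_ext ?_ ?_ ?_
      · rw [push_b, hgl]
      · rw [push_q, hgl]
        simp only [top_q, top_b]
        omega
      · rw [push_l]
        simp only [top_b, top_l]
        exact List.cons_head_tail _
    have hdrop : (⟨_, hgm.1⟩ : {l : List (Γ × ℕ) // IsGoodList R l}).1.dropLast = L.1 :=
      List.dropLast_concat
    rw [hpush, hdrop, ← hbA]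
    have hdel0 : ∀ i : Fin (n + 1),
        SL e bA n (Finsupp.single (β.del i) (bA L * (-1 : A) ^ (i : ℕ))) = 0 := by
      intro i
      rw [hdel i, sOne_of_notRed e (β.del i) hred, smul_zero]
    simp only [hdel0]
    rw [sOne_of_notRed e β hred, map_zero]
    simp

end Homotopy

end GoodResolution
namespace GoodResolution

section Homotopy0

variable {Γ : Type} [PartialOrder Γ] [DecidableEq Γ] {R : RankedPoset Γ}
variable {F : Type} [Field F] {A : Type} [Ring A] [Algebra F A]

set_option linter.unusedSectionVars false

theorem homotopy0_single (e : Γ → ℕ → A)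
    (hmul : ∀ x y : Γ, ∀ j k : ℕ, y ≠ R.star → y < x → j = R.rk x - R.rk y →
      1 ≤ k → k ≤ R.rk y → e x j * e y k = e x (j + k))
    (bA : Module.Basis {l : List (Γ × ℕ) // IsGoodList R l} F A)
    (hbA : ∀ L, bA L = gm e L.1) (β : ChainIdx R 0)
    (L : {l : List (Γ × ℕ) // IsGoodList R l}) :
    SNeg e bA (DN (F := F) e (Finsupp.single β (bA L)))
      + DL (F := F) e 0 (SL e bA 0 (Finsupp.single β (bA L)))
      = Finsupp.single β (bA L) := by
  have hq1 := β.hq1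
  have hq2 := β.hq2
  have hb_star : R.star < β.b := star_lt_b β
  have hl0 : β.l = [] := List.length_eq_zero_iff.mp β.hlen
  rw [DN_eq, dNeg_single, SL_single]
  by_cases hred : RedCond R β.b L.1
  · obtain ⟨hne, hlt, hk⟩ := hred
    have hp_mem : L.1.getLast hne ∈ L.1 := List.getLast_mem hne
    have hp1 := L.2.1 _ hp_mem
    have hrkx : R.rk β.b < R.rk (L.1.getLast hne).1 := R.rk_strictMono hlt
    have hgmM := mul_e_red e hmul hne hlt hk (ne_of_gt hb_star) hq1 hq2
    have hM : IsGoodList R (L.1.dropLast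
        ++ [((L.1.getLast hne).1, (L.1.getLast hne).2 + β.q)]) :=
      isGood_red_merge L.2 hne (by omega) (by omega)
    have hcoefM : bA L * e β.b β.q = bA ⟨_, hM⟩ := by
      rw [hbA, hbA]
      exact hgmM
    rw [hcoefM, SNeg_basis]
    have hneM : (⟨_, hM⟩ : {l : List (Γ × ℕ) // IsGoodList R l}).1 ≠ [] := by simp
    have hglM : (⟨_, hM⟩ : {l : List (Γ × ℕ) // IsGoodList R l}).1.getLast hneM
        = ((L.1.getLast hne).1, (L.1.getLast hne).2 + β.q) := List.getLast_concat
    have hdropM : (⟨_, hM⟩ : {l : List (Γ × ℕ) // IsGoodList R l}).1.dropLast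
        = L.1.dropLast := List.dropLast_concat
    simp only [sNegOne]
    rw [dif_pos hneM]
    rw [sOne_of_red e β hne ⟨hlt, hk⟩]
    rw [DL_eq, dMap_single]
    have hph : (push β (L.1.getLast hne).1 hlt).l.head
        (push β (L.1.getLast hne).1 hlt).l_ne_nil = β.b :=
      head_eq (show (push β (L.1.getLast hne).1 hlt).l = β.b :: β.l from rfl) _
    rw [hph, push_top]
    have hcoef2 : gm e L.1.dropLast
        * e (push β (L.1.getLast hne).1 hlt).b
          (R.rk (push β (L.1.getLast hne).1 hlt).b - R.rk β.b) = bA L := by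
      rw [push_b, ← hk, ← gm_append e L.1.dropLast (L.1.getLast hne),
        List.dropLast_append_getLast hne, ← hbA]
    rw [hcoef2, Fin.sum_univ_one]
    have hidx : (⟨((⟨_, hM⟩ : {l : List (Γ × ℕ) // IsGoodList R l}).1.getLast hneM).1,
          ((⟨_, hM⟩ : {l : List (Γ × ℕ) // IsGoodList R l}).1.getLast hneM).2, [],
          ((⟨_, hM⟩ : {l : List (Γ × ℕ) // IsGoodList R l}).2.1 _ (List.getLast_mem hneM)).2.1,
          ((⟨_, hM⟩ : {l : List (Γ × ℕ) // IsGoodList R l}).2.1 _ (List.getLast_mem hneM)).2.2,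
          rfl, List.pairwise_singleton _ _, by simp⟩ : ChainIdx R 0)
        = (push β (L.1.getLast hne).1 hlt).del 0 := by
      refine chainIdx_ext ?_ ?_ ?_
      · show ((⟨_, hM⟩ : {l : List (Γ × ℕ) // IsGoodList R l}).1.getLast hneM).1
          = (push β (L.1.getLast hne).1 hlt).b
        rw [hglM, push_b]
      · show ((⟨_, hM⟩ : {l : List (Γ × ℕ) // IsGoodList R l}).1.getLast hneM).2
          = ((push β (L.1.getLast hne).1 hlt).del 0).q
        rw [hglM, del_q, push_q]
        omega
      · show ([] : List Γ) = ((push β (L.1.getLast hne).1 hlt).del 0).l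
        rw [del_l, push_l]
        simp [hl0]
    rw [hidx, hdropM]
    simp only [Fin.val_zero, pow_zero, mul_one]
    abel
  · have hgm := mul_e_notRed (e := e) (b := β.b) (j := β.q) L.2 (ne_of_gt hb_star)
      hq1 hq2 hred
    have hcoef : bA L * e β.b β.q = bA ⟨_, hgm.1⟩ := by
      rw [hbA, hbA]
      exact hgm.2
    rw [hcoef, SNeg_basis]
    have hne' : (⟨_, hgm.1⟩ : {l : List (Γ × ℕ) // IsGoodList R l}).1 ≠ [] := by simp
    have hgl : (⟨_, hgm.1⟩ : {l : List (Γ × ℕ) // IsGoodList R l}).1.getLast hne'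
        = (β.b, β.q) := List.getLast_concat
    have hdrop : (⟨_, hgm.1⟩ : {l : List (Γ × ℕ) // IsGoodList R l}).1.dropLast = L.1 :=
      List.dropLast_concat
    simp only [sNegOne]
    rw [dif_pos hne']
    have hidx : (⟨((⟨_, hgm.1⟩ : {l : List (Γ × ℕ) // IsGoodList R l}).1.getLast hne').1,
          ((⟨_, hgm.1⟩ : {l : List (Γ × ℕ) // IsGoodList R l}).1.getLast hne').2, [],
          ((⟨_, hgm.1⟩ : {l : List (Γ × ℕ) // IsGoodList R l}).2.1 _ (List.getLast_mem hne')).2.1,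
          ((⟨_, hgm.1⟩ : {l : List (Γ × ℕ) // IsGoodList R l}).2.1 _ (List.getLast_mem hne')).2.2,
          rfl, List.pairwise_singleton _ _, by simp⟩ : ChainIdx R 0) = β := by
      refine chainIdx_ext ?_ ?_ ?_
      · show ((⟨_, hgm.1⟩ : {l : List (Γ × ℕ) // IsGoodList R l}).1.getLast hne').1 = β.b
        rw [hgl]
      · show ((⟨_, hgm.1⟩ : {l : List (Γ × ℕ) // IsGoodList R l}).1.getLast hne').2 = β.q
        rw [hgl]
      · exact hl0.symm
    rw [hidx, hdrop, ← hbA]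
    rw [sOne_of_notRed e β hred, map_zero, add_zero]

theorem homotopyA_single (e : Γ → ℕ → A)
    (bA : Module.Basis {l : List (Γ × ℕ) // IsGoodList R l} F A)
    (hbA : ∀ L, bA L = gm e L.1) (ε : A →ₗ[F] F)
    (hε : ∀ l : {l : List (Γ × ℕ) // IsGoodList R l},
      ε (goodMonomial R A e l) = if l.1 = [] then 1 else 0)
    (L : {l : List (Γ × ℕ) // IsGoodList R l}) :
    algebraMap F A (ε (bA L)) + DN (F := F) e (SNeg e bA (bA L)) = bA L := by
  have hεL : ε (bA L) = if L.1 = [] then 1 else 0 := by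
    rw [hbA]
    exact hε L
  rw [SNeg_basis]
  by_cases hne : L.1 = []
  · rw [hεL, if_pos hne]
    simp only [sNegOne]
    rw [dif_neg (fun h => h hne), map_zero, map_one, add_zero, hbA, hne]
    rfl
  · rw [hεL, if_neg hne, map_zero, zero_add]
    simp only [sNegOne]
    rw [dif_pos hne, DN_eq, dNeg_single]
    show gm e L.1.dropLast * e (L.1.getLast hne).1 (L.1.getLast hne).2 = bA L
    rw [← gm_append, List.dropLast_append_getLast hne, ← hbA]

theorem εDN_single (e : Γ → ℕ → A)
    (hmul : ∀ x y : Γ, ∀ j k : ℕ, y ≠ R.star → y < x → j = R.rk x - R.rk y →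
      1 ≤ k → k ≤ R.rk y → e x j * e y k = e x (j + k))
    (bA : Module.Basis {l : List (Γ × ℕ) // IsGoodList R l} F A)
    (hbA : ∀ L, bA L = gm e L.1) (ε : A →ₗ[F] F)
    (hε : ∀ l : {l : List (Γ × ℕ) // IsGoodList R l},
      ε (goodMonomial R A e l) = if l.1 = [] then 1 else 0)
    (β : ChainIdx R 0) (L : {l : List (Γ × ℕ) // IsGoodList R l}) :
    ε (DN (F := F) e (Finsupp.single β (bA L))) = 0 := by
  have hq1 := β.hq1
  have hq2 := β.hq2
  have hb_star : R.star < β.b := star_lt_b β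
  rw [DN_eq, dNeg_single]
  by_cases hred : RedCond R β.b L.1
  · obtain ⟨hne, hlt, hk⟩ := hred
    have hp_mem : L.1.getLast hne ∈ L.1 := List.getLast_mem hne
    have hp1 := L.2.1 _ hp_mem
    have hrkx : R.rk β.b < R.rk (L.1.getLast hne).1 := R.rk_strictMono hlt
    have hM : IsGoodList R (L.1.dropLast
        ++ [((L.1.getLast hne).1, (L.1.getLast hne).2 + β.q)]) :=
      isGood_red_merge L.2 hne (by omega) (by omega)
    rw [hbA, mul_e_red e hmul hne hlt hk (ne_of_gt hb_star) hq1 hq2]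
    rw [show gm e (L.1.dropLast ++ [((L.1.getLast hne).1, (L.1.getLast hne).2 + β.q)])
      = goodMonomial R A e ⟨_, hM⟩ from rfl, hε]
    simp
  · have hgm := mul_e_notRed (e := e) (b := β.b) (j := β.q) L.2 (ne_of_gt hb_star)
      hq1 hq2 hred
    rw [hbA, hgm.2]
    rw [show gm e (L.1 ++ [(β.b, β.q)]) = goodMonomial R A e ⟨_, hgm.1⟩ from rfl, hε]
    simp

end Homotopy0

end GoodResolution
namespace GoodResolution

section Glue

variable {Γ : Type} [PartialOrder Γ] [DecidableEq Γ] {R : RankedPoset Γ}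
variable {F : Type} [Field F] {A : Type} [Ring A] [Algebra F A]

set_option linter.unusedSectionVars false

theorem dd_zero (F' : Type) [Field F'] [Algebra F' A] (e : Γ → ℕ → A)
    (hmul : ∀ x y : Γ, ∀ j k : ℕ, y ≠ R.star → y < x → j = R.rk x - R.rk y →
      1 ≤ k → k ≤ R.rk y → e x j * e y k = e x (j + k)) (n : ℕ)
    (x : ChainIdx R (n + 2) →₀ A) :
    dMap R A (fun b a => e b (R.rk b - R.rk a)) n
      (dMap R A (fun b a => e b (R.rk b - R.rk a)) (n + 1) x) = 0 := by
  have h : (DL (R := R) (F := F') e n).comp (DL (R := R) (F := F') e (n + 1)) = 0 := by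
    apply Finsupp.lhom_ext
    intro β m
    simpa [LinearMap.comp_apply, DL_eq] using dd_single F' e hmul β m
  have h2 := LinearMap.congr_fun h x
  simpa [LinearMap.comp_apply, DL_eq] using h2

theorem dnd_zero (F' : Type) [Field F'] [Algebra F' A] (e : Γ → ℕ → A)
    (hmul : ∀ x y : Γ, ∀ j k : ℕ, y ≠ R.star → y < x → j = R.rk x - R.rk y →
      1 ≤ k → k ≤ R.rk y → e x j * e y k = e x (j + k))
    (x : ChainIdx R 1 →₀ A) :
    dNeg R A e (dMap R A (fun b a => e b (R.rk b - R.rk a)) 0 x) = 0 := by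
  have h : (DN (R := R) (F := F') e).comp (DL (R := R) (F := F') e 0) = 0 := by
    apply Finsupp.lhom_ext
    intro β m
    simpa [LinearMap.comp_apply, DL_eq, DN_eq] using dnd_single F' e hmul β m
  have h2 := LinearMap.congr_fun h x
  simpa [LinearMap.comp_apply, DL_eq, DN_eq] using h2

theorem homotopy_all (e : Γ → ℕ → A)
    (hmul : ∀ x y : Γ, ∀ j k : ℕ, y ≠ R.star → y < x → j = R.rk x - R.rk y →
      1 ≤ k → k ≤ R.rk y → e x j * e y k = e x (j + k))
    (bA : Module.Basis {l : List (Γ × ℕ) // IsGoodList R l} F A)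
    (hbA : ∀ L, bA L = gm e L.1) (n : ℕ) (x : ChainIdx R (n + 1) →₀ A) :
    SL e bA n (DL (F := F) e n x) + DL (F := F) e (n + 1) (SL e bA (n + 1) x) = x := by
  have h : (SL e bA n).comp (DL (F := F) e n)
      + (DL (F := F) e (n + 1)).comp (SL e bA (n + 1)) = LinearMap.id := by
    apply lhom_ext_basis bA
    intro β L
    simpa using homotopy_single e hmul bA hbA β L
  simpa using LinearMap.congr_fun h x

theorem homotopy0_all (e : Γ → ℕ → A)
    (hmul : ∀ x y : Γ, ∀ j k : ℕ, y ≠ R.star → y < x → j = R.rk x - R.rk y →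
      1 ≤ k → k ≤ R.rk y → e x j * e y k = e x (j + k))
    (bA : Module.Basis {l : List (Γ × ℕ) // IsGoodList R l} F A)
    (hbA : ∀ L, bA L = gm e L.1) (x : ChainIdx R 0 →₀ A) :
    SNeg e bA (DN (F := F) e x) + DL (F := F) e 0 (SL e bA 0 x) = x := by
  have h : (SNeg e bA).comp (DN (F := F) e)
      + (DL (F := F) e 0).comp (SL e bA 0) = LinearMap.id := by
    apply lhom_ext_basis bA
    intro β L
    simpa using homotopy0_single e hmul bA hbA β L
  simpa using LinearMap.congr_fun h x

theorem homotopyA_all (e : Γ → ℕ → A)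
    (bA : Module.Basis {l : List (Γ × ℕ) // IsGoodList R l} F A)
    (hbA : ∀ L, bA L = gm e L.1) (ε : A →ₗ[F] F)
    (hε : ∀ l : {l : List (Γ × ℕ) // IsGoodList R l},
      ε (goodMonomial R A e l) = if l.1 = [] then 1 else 0) (a : A) :
    algebraMap F A (ε a) + DN (F := F) e (SNeg e bA a) = a := by
  have h : (Algebra.linearMap F A).comp ε + (DN (F := F) e).comp (SNeg e bA)
      = LinearMap.id := by
    apply Module.Basis.ext bA
    intro L
    simpa using homotopyA_single e bA hbA ε hε L
  simpa using LinearMap.congr_fun h a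

theorem εDN_zero (e : Γ → ℕ → A)
    (hmul : ∀ x y : Γ, ∀ j k : ℕ, y ≠ R.star → y < x → j = R.rk x - R.rk y →
      1 ≤ k → k ≤ R.rk y → e x j * e y k = e x (j + k))
    (bA : Module.Basis {l : List (Γ × ℕ) // IsGoodList R l} F A)
    (hbA : ∀ L, bA L = gm e L.1) (ε : A →ₗ[F] F)
    (hε : ∀ l : {l : List (Γ × ℕ) // IsGoodList R l},
      ε (goodMonomial R A e l) = if l.1 = [] then 1 else 0)
    (x : ChainIdx R 0 →₀ A) : ε (dNeg R A e x) = 0 := by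
  have h : ε.comp (DN (R := R) (F := F) e) = 0 := by
    apply lhom_ext_basis bA
    intro β L
    simpa using εDN_single e hmul bA hbA ε hε β L
  have h2 := LinearMap.congr_fun h x
  simpa [LinearMap.comp_apply, DN_eq] using h2

end Glue

end GoodResolution
/-- Let `A` be a good-monomial algebra for `Γ` over `F` (for instance the associated
graded algebra `A'_Γ` of the splitting algebra), with augmentation `ε`.  With
`f(b,a) = e(b, d(b,a))`, the sequence
`⋯ → A ⊗ Ĉ₁ → A ⊗ Ĉ₀ → A ⊗ Ĉ₋₁ → A → F → 0` is exact; in particular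
`A ⊗ Ĉ_• → A` is a free resolution of the left `A`-module `F = A/A₊`. -/
theorem goodMonomialAlgebra_resolution_exact
    {Γ : Type} [PartialOrder Γ] [DecidableEq Γ] [Fintype Γ] (R : RankedPoset Γ)
    (F : Type) [Field F] (A : Type) [Ring A] [Algebra F A]
    (e : Γ → ℕ → A)
    -- (i) the good monomials form an `F`-basis of `A`
    (hli : LinearIndependent F (goodMonomial R A e))
    (hspan : Submodule.span F (Set.range (goodMonomial R A e)) = ⊤)
    -- (ii) `e(x,j)·e(y,k) = e(x,j+k)` whenever `(x,j) ⊵ (y,k)`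
    (hmul : ∀ x y : Γ, ∀ j k : ℕ, y ≠ R.star → y < x → j = R.rk x - R.rk y →
      1 ≤ k → k ≤ R.rk y → e x j * e y k = e x (j + k))
    -- the augmentation `ε : A → F`
    (ε : A →ₗ[F] F)
    (hε : ∀ l : {l : List (Γ × ℕ) // IsGoodList R l},
      ε (goodMonomial R A e l) = if l.1 = [] then 1 else 0) :
    -- exactness at `F`
    Function.Surjective ε ∧
    -- exactness at `A`
    (∀ a : A, ε a = 0 ↔ ∃ x, dNeg R A e x = a) ∧
    -- exactness at `A ⊗ Ĉ₋₁`
    (∀ x : ChainIdx R 0 →₀ A, dNeg R A e x = 0 ↔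
      ∃ y, dMap R A (fun b a => e b (R.rk b - R.rk a)) 0 y = x) ∧
    -- exactness at `A ⊗ Ĉ_n` for all `n ≥ 0`
    (∀ (n : ℕ) (x : ChainIdx R (n + 1) →₀ A),
      dMap R A (fun b a => e b (R.rk b - R.rk a)) n x = 0 ↔
        ∃ y, dMap R A (fun b a => e b (R.rk b - R.rk a)) (n + 1) y = x) := by
  have hsp : ⊤ ≤ Submodule.span F (Set.range (goodMonomial R A e)) := le_of_eq hspan.symm
  let bA : Module.Basis {l : List (Γ × ℕ) // IsGoodList R l} F A := Module.Basis.mk hli hsp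
  have hbA : ∀ L, bA L = GoodResolution.gm e L.1 := fun L => Module.Basis.mk_apply hli hsp L
  refine ⟨?_, ?_, ?_, ?_⟩
  · -- surjectivity of ε
    intro c
    refine ⟨c • 1, ?_⟩
    have h1 : ε 1 = 1 := by
      have h := hε ⟨[], GoodResolution.isGood_nil⟩
      simpa [goodMonomial] using h
    rw [map_smul, h1, smul_eq_mul, mul_one]
  · -- exactness at A
    intro a
    constructor
    · intro h
      refine ⟨GoodResolution.SNeg e bA a, ?_⟩
      have h2 := GoodResolution.homotopyA_all e bA hbA ε hε a
      rw [h, map_zero, zero_add] at h2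
      rw [← GoodResolution.DN_eq (F := F)]
      exact h2
    · rintro ⟨x, rfl⟩
      exact GoodResolution.εDN_zero e hmul bA hbA ε hε x
  · -- exactness at A ⊗ Ĉ₋₁
    intro x
    constructor
    · intro h
      refine ⟨GoodResolution.SL e bA 0 x, ?_⟩
      have h2 := GoodResolution.homotopy0_all e hmul bA hbA x
      rw [GoodResolution.DN_eq, h, map_zero, zero_add] at h2
      rw [← GoodResolution.DL_eq (F := F)]
      exact h2
    · rintro ⟨y, rfl⟩
      exact GoodResolution.dnd_zero F e hmul y
  · -- exactness at A ⊗ Ĉ_n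
    intro n x
    constructor
    · intro h
      refine ⟨GoodResolution.SL e bA (n + 1) x, ?_⟩
      have h2 := GoodResolution.homotopy_all e hmul bA hbA n x
      rw [GoodResolution.DL_eq, h, map_zero, zero_add] at h2
      rw [← GoodResolution.DL_eq (F := F)]
      exact h2
    · rintro ⟨y, rfl⟩
      exact GoodResolution.dd_zero F e hmul n y
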